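/- Let κ be an infinite cardinal and let λ = (2^κ)⁺. Then every abelian group G of cardinality λ satisfies G → (κ×2)^{FS_matrix}_κ: for every colouring c : G → C with |C| ≤ κ, there exists a family (x_{α,i} | α < κ, i < 2) of pairwise distinct elements of G such that c takes a single constant value on the set {x_{α,0} | α < κ} ∪ {x_{α,1} | α < κ} ∪ {x_{α,0} + x_{β,1} | α, β < κ}. -/

import Mathlib

universe u
open Cardinal Set
set_option linter.unusedSectionVars false
namespace Stmt2Proof

variable {G : Type u} [AddCommGroup G] {C : Type u}

def goodSet (c : G → C) (w : G) {K' : Type u} [LT K'] (ι : K')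
    (prev : ∀ ι' : K', ι' < ι → G) : Set G :=
  {x | (∀ ι' (h : ι' < ι), c (x - prev ι' h) = c (w - prev ι' h)) ∧
    ∀ ι' (h : ι' < ι), x ≠ prev ι' h}

noncomputable def gMin (s : Set G) (h : s.Nonempty) : G :=
  (WellOrderingRel.isWellOrder.toIsWellFounded.wf (α := G)).min s h

lemma gMin_mem (s : Set G) (h : s.Nonempty) : gMin s h ∈ s :=
  WellFounded.min_mem _ s h

lemma gMin_congr {s t : Set G} (hst : s = t) (h : s.Nonempty) (h' : t.Nonempty) :
    gMin s h = gMin t h' := by subst hst; rfl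

open scoped Classical in
noncomputable def eseq (c : G → C) (w : G) {K' : Type u} [LinearOrder K'] [WellFoundedLT K'] :
    K' → G :=
  wellFounded_lt.fix fun ι prev =>
    if h : (goodSet c w ι prev).Nonempty then gMin _ h else w

open scoped Classical in
lemma eseq_def (c : G → C) (w : G) {K' : Type u} [LinearOrder K'] [WellFoundedLT K'] (ι : K') :
    eseq c w ι = if h : (goodSet c w ι fun ι' _ => eseq c w ι').Nonempty
      then gMin _ h else w :=
  wellFounded_lt.fix_eq _ ι

lemma w_mem_goodSet (c : G → C) (w : G) {K' : Type u} [LinearOrder K'] [WellFoundedLT K']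
    (ι : K') (hw : ∀ ι' (_ : ι' < ι), eseq c w ι' ≠ w) :
    w ∈ goodSet c w ι fun ι' _ => eseq c w ι' :=
  ⟨fun _ _ => rfl, fun ι' h' hh => hw ι' h' hh.symm⟩

lemma eseq_mem_goodSet (c : G → C) (w : G) {K' : Type u} [LinearOrder K'] [WellFoundedLT K']
    (ι : K') (hw : ∀ ι' (_ : ι' < ι), eseq c w ι' ≠ w) :
    eseq c w ι ∈ goodSet c w ι fun ι' _ => eseq c w ι' := by
  classical
  have hne : (goodSet c w ι fun ι' _ => eseq c w ι').Nonempty := ⟨w, w_mem_goodSet c w ι hw⟩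
  rw [eseq_def c w ι, dif_pos hne]
  exact gMin_mem _ hne

section Long

variable (c : G → C) (w : G) {K' : Type u} [LinearOrder K'] [WellFoundedLT K']
  (hw : ∀ ι : K', eseq c w ι ≠ w)

include hw

lemma eseq_pair {ι' ι : K'} (h : ι' < ι) :
    c (eseq c w ι - eseq c w ι') = c (w - eseq c w ι') :=
  (eseq_mem_goodSet c w ι fun ι'' _ => hw ι'').1 ι' h

lemma eseq_ne {ι' ι : K'} (h : ι' < ι) : eseq c w ι ≠ eseq c w ι' :=
  (eseq_mem_goodSet c w ι fun ι'' _ => hw ι'').2 ι' h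

lemma eseq_injective : Function.Injective (eseq c w (K' := K')) := by
  intro a b hab
  rcases lt_trichotomy a b with h | h | h
  · exact absurd hab.symm (eseq_ne c w hw h)
  · exact h
  · exact absurd hab (eseq_ne c w hw h)

end Long

/-- congruence: two `w`'s with the same colour-trace produce the same sequence. -/
lemma eseq_congr (c : G → C) {K' : Type u} [LinearOrder K'] [WellFoundedLT K']
    {w w' : G} {ℓ : K'}
    (hmin : ∀ ι : K', ι < ℓ → eseq c w ι ≠ w)
    (hτ : ∀ ι : K', ι < ℓ → c (w - eseq c w ι) = c (w' - eseq c w' ι)) :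
    ∀ ι : K', ι ≤ ℓ → eseq c w ι = eseq c w' ι := by
  classical
  intro ι
  induction ι using WellFoundedLT.induction with
  | ind ι IH =>
    intro hι
    have hprev : ∀ ι' : K', ι' < ι → eseq c w ι' = eseq c w' ι' := fun ι' h =>
      IH ι' h (le_of_lt (lt_of_lt_of_le h hι))
    have hgood : (goodSet c w ι fun ι' _ => eseq c w ι')
        = goodSet c w' ι fun ι' _ => eseq c w' ι' := by
      ext x
      constructor
      · rintro ⟨h1, h2⟩
        refine ⟨fun ι' h => ?_, fun ι' h => ?_⟩
        · show c (x - eseq c w' ι') = c (w' - eseq c w' ι')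
          calc c (x - eseq c w' ι') = c (x - eseq c w ι') := by rw [hprev ι' h]
            _ = c (w - eseq c w ι') := h1 ι' h
            _ = c (w' - eseq c w' ι') := hτ ι' (lt_of_lt_of_le h hι)
        · show x ≠ eseq c w' ι'
          rw [← hprev ι' h]; exact h2 ι' h
      · rintro ⟨h1, h2⟩
        refine ⟨fun ι' h => ?_, fun ι' h => ?_⟩
        · show c (x - eseq c w ι') = c (w - eseq c w ι')
          calc c (x - eseq c w ι') = c (x - eseq c w' ι') := by rw [← hprev ι' h]
            _ = c (w' - eseq c w' ι') := h1 ι' h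
            _ = c (w - eseq c w ι') := (hτ ι' (lt_of_lt_of_le h hι)).symm
        · show x ≠ eseq c w ι'
          rw [hprev ι' h]; exact h2 ι' h
    have hne : (goodSet c w ι fun ι' _ => eseq c w ι').Nonempty :=
      ⟨w, w_mem_goodSet c w ι fun ι' h => hmin ι' (lt_of_lt_of_le h hι)⟩
    have hne' : (goodSet c w' ι fun ι' _ => eseq c w' ι').Nonempty := by
      rw [← hgood]; exact hne
    rw [eseq_def c w ι, eseq_def c w' ι, dif_pos hne, dif_pos hne']
    exact gMin_congr hgood hne hne' 


/-- There is some `w` whose sequence never returns to `w`. -/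
lemma exists_long (c : G → C) (K' : Type u) [LinearOrder K'] [WellFoundedLT K']
    {κ : Cardinal.{u}} (hκ : ℵ₀ ≤ κ) (hC : #C ≤ κ)
    (hsmall : ∀ ι : K', #(Iio ι) ≤ κ) (hK' : #K' ≤ 2 ^ κ)
    (hG : 2 ^ κ < #G) :
    ∃ w : G, ∀ ι : K', eseq c w ι ≠ w := by
  by_contra hcon
  push_neg at hcon
  have hLex : ∀ w : G, {ι : K' | eseq c w ι = w}.Nonempty := fun w => hcon w
  let L : G → K' := fun w => wellFounded_lt.min {ι : K' | eseq c w ι = w} (hLex w)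
  have hL : ∀ w, eseq c w (L w) = w := fun w => wellFounded_lt.min_mem _ (hLex w)
  have hLmin : ∀ w (ι : K'), ι < L w → eseq c w ι ≠ w := fun w ι hι hh =>
    wellFounded_lt.not_lt_min (s := {ι : K' | eseq c w ι = w}) (hh : ι ∈ {ι : K' | eseq c w ι = w}) hι
  let Φ : G → Σ ι : K', (↥(Iio ι) → C) :=
    fun w => ⟨L w, fun ι' => c (w - eseq c w ι'.1)⟩
  have hΦinj : Function.Injective Φ := by
    intro w w' h
    have h' : (⟨L w, fun ι' : ↥(Iio (L w)) => c (w - eseq c w ι'.1)⟩ :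
        Σ ι : K', (↥(Iio ι) → C)) = ⟨L w', fun ι' : ↥(Iio (L w')) => c (w' - eseq c w' ι'.1)⟩ := h
    have h1 : L w = L w' := congrArg Sigma.fst h'
    have h2 : HEq (fun ι' : ↥(Iio (L w)) => c (w - eseq c w ι'.1))
        (fun ι' : ↥(Iio (L w')) => c (w' - eseq c w' ι'.1)) := by
      injection h' 
    revert h2
    rw [← h1]
    intro h2
    have h2' := eq_of_heq h2
    have hτ : ∀ ι : K', ι < L w → c (w - eseq c w ι) = c (w' - eseq c w' ι) := by
      intro ι hι
      exact congrFun h2' ⟨ι, hι⟩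
    have heq := eseq_congr c (w := w) (w' := w') (ℓ := L w) (hLmin w) hτ (L w) le_rfl
    have hw : w = eseq c w' (L w) := (hL w).symm.trans heq
    rw [h1, hL w'] at hw
    exact hw
  have hbound : #(Σ ι : K', (↥(Iio ι) → C)) ≤ 2 ^ κ := by
    have hκ0 : κ ≠ 0 := (aleph0_pos.trans_le hκ).ne'
    rw [Cardinal.mk_sigma]
    calc Cardinal.sum (fun ι : K' => #(↥(Iio ι) → C))
        ≤ Cardinal.sum (fun _ : K' => 2 ^ κ) := by
          apply Cardinal.sum_le_sum
          intro ι
          rw [← Cardinal.power_def]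
          calc #C ^ #(↥(Iio ι)) ≤ κ ^ #(↥(Iio ι)) := power_le_power_right hC
            _ ≤ κ ^ κ := power_le_power_left hκ0 (hsmall ι)
            _ = 2 ^ κ := power_self_eq hκ
      _ = #K' * 2 ^ κ := sum_const' _ _
      _ ≤ 2 ^ κ * 2 ^ κ := mul_le_mul_left hK' _
      _ = 2 ^ κ := mul_eq_self (hκ.trans (cantor κ).le)
  exact absurd ((mk_le_of_injective hΦinj).trans hbound) (not_le.mpr hG)


lemma card_le_of_initialSegs {X : Type u} [LinearOrder X] [WellFoundedLT X] {κ : Cardinal.{u}}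
    (h : ∀ x : X, #(Iio x) < κ) : #X ≤ κ := by
  by_contra hX
  push_neg at hX
  have hlt : κ.ord < Ordinal.type ((· < ·) : X → X → Prop) := by
    by_contra hle
    push_neg at hle
    have := Ordinal.card_le_card hle
    rw [Ordinal.card_type, Cardinal.card_ord] at this
    exact absurd this (not_le.mpr hX)
  obtain ⟨x, hx⟩ := Ordinal.typein_surj ((· < ·) : X → X → Prop) hlt
  have hcard : #(Iio x) = κ := by
    have h2 := Ordinal.card_typein (r := ((· < ·) : X → X → Prop)) x
    rw [hx, Cardinal.card_ord] at h2
    exact h2.symm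
  exact absurd hcard (h x).ne

lemma exists_split {X : Type u} [LinearOrder X] [WellFoundedLT X] {κ : Cardinal.{u}}
    (hκ : ℵ₀ ≤ κ) (hX : κ < #X) :
    ∃ t : X, κ ≤ #(Iio t) ∧ κ < #(Ioi t) := by
  have hT : {x : X | κ ≤ #(Iio x)}.Nonempty := by
    by_contra hT
    rw [Set.not_nonempty_iff_eq_empty] at hT
    have hall : ∀ x : X, #(Iio x) < κ := fun x =>
      not_le.mp fun hx => Set.eq_empty_iff_forall_notMem.mp hT x hx
    exact absurd (card_le_of_initialSegs hall) (not_le.mpr hX)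
  set T := {x : X | κ ≤ #(Iio x)} with hTdef
  let t := wellFounded_lt.min T hT
  have ht1 : κ ≤ #(Iio t) := wellFounded_lt.min_mem T hT
  have htmin : ∀ x : X, x < t → ¬ κ ≤ #(Iio x) := fun x hx hmem =>
    wellFounded_lt.not_lt_min T (hmem : x ∈ T) hx
  have ht2 : #(Iio t) ≤ κ := by
    apply card_le_of_initialSegs (X := ↥(Iio t))
    intro y
    have hy : (y : X) < t := y.2
    have hsub : #(Iio y) ≤ #(Iio (y : X)) := by
      refine mk_le_of_injective
        (f := fun z : ↥(Iio y) => (⟨(z.1 : X), Subtype.coe_lt_coe.mpr z.2⟩ : ↥(Iio (y : X)))) ?_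
      intro a b hab
      have h0 := congrArg Subtype.val hab
      exact Subtype.ext (Subtype.ext h0)
    exact lt_of_le_of_lt hsub (not_le.mp (htmin _ hy))
  have ht3 : κ < #(Ioi t) := by
    by_contra hIoi
    push_neg at hIoi
    have hcover : (univ : Set X) ⊆ Iio t ∪ ({t} ∪ Ioi t) := by
      intro x _
      rcases lt_trichotomy x t with h | h | h
      · exact Or.inl h
      · exact Or.inr (Or.inl h)
      · exact Or.inr (Or.inr h)
    have hXle : #X ≤ #(Iio t) + (#({t} : Set X) + #(Ioi t)) := by
      calc #X = #(univ : Set X) := mk_univ.symm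
        _ ≤ #(↥(Iio t ∪ ({t} ∪ Ioi t))) := mk_le_mk_of_subset hcover
        _ ≤ #(Iio t) + #(↥(({t} : Set X) ∪ Ioi t)) := mk_union_le _ _
        _ ≤ #(Iio t) + (#({t} : Set X) + #(Ioi t)) := by
            exact add_le_add_right (mk_union_le _ _) _
    have : #X ≤ κ := by
      refine hXle.trans ?_
      have h1 : (#({t} : Set X) : Cardinal) = 1 := mk_singleton t
      rw [h1]
      calc #(Iio t) + (1 + #(Ioi t)) ≤ κ + (κ + κ) := by
            refine add_le_add ht2 (add_le_add ?_ hIoi)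
            exact le_trans (le_of_lt one_lt_aleph0) hκ
        _ = κ := by rw [add_eq_self hκ, add_eq_self hκ]
    exact absurd this (not_le.mpr hX)
  exact ⟨t, ht1, ht3⟩

lemma exists_big_fiber {α β : Type u} {κ : Cardinal.{u}} (hκ : ℵ₀ ≤ κ)
    (f : α → β) (hβ : #β ≤ κ) (hα : κ < #α) : ∃ b : β, κ < #(f ⁻¹' {b}) := by
  by_contra h
  push_neg at h
  have h1 : #α = Cardinal.sum fun b : β => #(f ⁻¹' {b}) := by
    rw [← Cardinal.mk_sigma]
    exact mk_congr (Equiv.sigmaFiberEquiv f).symm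
  have h2 : #α ≤ κ := by
    rw [h1]
    calc Cardinal.sum (fun b : β => #(f ⁻¹' {b}))
        ≤ Cardinal.sum (fun _ : β => κ) := Cardinal.sum_le_sum _ _ fun b => h b
      _ = #β * κ := sum_const' _ _
      _ ≤ κ * κ := mul_le_mul_left hβ _
      _ = κ := mul_eq_self hκ
  exact absurd h2 (not_le.mpr hα)

end Stmt2Proof



namespace Stmt2Proof

/-- Main auxiliary construction with abstract index types. -/
lemma main_aux (κ : Cardinal.{u}) (hκ : Cardinal.aleph0 ≤ κ)
    {G : Type u} [AddCommGroup G] {C : Type u} (c : G → C) (hC : #C ≤ κ)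
    (hG2 : (2 : Cardinal.{u}) ^ κ < #G)
    (K' : Type u) [LinearOrder K'] [WellFoundedLT K']
    (hK'card : #K' = Order.succ κ) (hsmall : ∀ ι : K', #(Iio ι) ≤ κ)
    (K : Type u) (hK : #K = κ) :
    ∃ x : K → Fin 2 → G,
      Function.Injective (fun p : K × Fin 2 => x p.1 p.2) ∧
      ∃ δ : C, ∀ z ∈ (Set.range fun α => x α 0) ∪ (Set.range fun α => x α 1) ∪
          {z | ∃ α β, z = x α 0 + x β 1}, c z = δ := by
  classical
  obtain ⟨w, hw⟩ := exists_long c K' hκ hC hsmall (hK'card ▸ Order.succ_le_of_lt (cantor κ)) hG2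
  have hκK' : κ < #K' := by rw [hK'card]; exact Order.lt_succ κ
  obtain ⟨γ, hγ⟩ := exists_big_fiber hκ (fun ι : K' => c (w - eseq c w ι)) hC hκK'
  set Fb : Set K' := (fun ι : K' => c (w - eseq c w ι)) ⁻¹' {γ} with hFbdef
  obtain ⟨t, ht1, ht3⟩ := exists_split (X := ↥Fb) hκ (by exact hγ)
  obtain ⟨q⟩ : Nonempty (K ↪ ↥(Iio t)) := by
    rw [← Cardinal.le_def, hK]; exact ht1
  let E : ↥Fb → G := fun x => eseq c w (x : K')
  have hEinj : Function.Injective E := fun x y h =>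
    Subtype.ext (eseq_injective c w hw h)
  set Bad : Set ↥Fb := {x | ∃ β : K, E x = E t + E t - E ((q β).1)} with hBaddef
  have hBadcard : #(↥Bad) ≤ κ := by
    have hch : ∀ x : ↥Bad, ∃ β : K, E x.1 = E t + E t - E ((q β).1) := fun x => x.2
    choose g hg using hch
    refine le_trans (mk_le_of_injective (f := g) ?_) (le_of_eq hK)
    intro x y hxy
    apply Subtype.ext
    apply hEinj
    rw [hg x, hg y, hxy]
  have hUpper : κ < #(↥(Ioi t \ Bad)) := by
    by_contra hcon
    push_neg at hcon
    have hcover : (Ioi t : Set ↥Fb) ⊆ (Ioi t \ Bad) ∪ Bad := fun x hx => by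
      by_cases hxB : x ∈ Bad
      · exact Or.inr hxB
      · exact Or.inl ⟨hx, hxB⟩
    have hle : #(Ioi t : Set ↥Fb) ≤ κ := by
      calc #(Ioi t : Set ↥Fb) ≤ #(↥((Ioi t \ Bad) ∪ Bad)) := mk_le_mk_of_subset hcover
        _ ≤ #(↥(Ioi t \ Bad)) + #(↥Bad) := mk_union_le _ _
        _ ≤ κ + κ := add_le_add hcon hBadcard
        _ = κ := add_eq_self hκ
    exact absurd hle (not_le.mpr ht3)
  obtain ⟨p⟩ : Nonempty (K ↪ ↥(Ioi t \ Bad)) := by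
    rw [← Cardinal.le_def, hK]; exact le_of_lt hUpper
  have hfib : ∀ x : ↥Fb, c (w - E x) = γ := fun x => x.2
  have hpair : ∀ x y : ↥Fb, x < y → c (E y - E x) = γ := by
    intro x y h
    have h2 := eseq_pair c w hw (ι' := (x : K')) (ι := (y : K')) (Subtype.coe_lt_coe.mpr h)
    rw [show E y - E x = eseq c w (y : K') - eseq c w (x : K') from rfl, h2]
    exact hfib x
  let a : K → G := fun α => E ((p α).1) - E t
  let b : K → G := fun α => E t - E ((q α).1)
  have hta : ∀ α : K, t < (p α).1 := fun α => (p α).2.1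
  have hqt : ∀ α : K, (q α).1 < t := fun α => (q α).2
  have hca : ∀ α, c (a α) = γ := fun α => hpair t ((p α).1) (hta α)
  have hcb : ∀ α, c (b α) = γ := fun α => hpair ((q α).1) t (hqt α)
  have hcab : ∀ α β, c (a α + b β) = γ := by
    intro α β
    have h1 : a α + b β = E ((p α).1) - E ((q β).1) := by
      show E ((p α).1) - E t + (E t - E ((q β).1)) = _
      abel
    rw [h1]
    exact hpair ((q β).1) ((p α).1) (lt_trans (hqt β) (hta α))
  have hpBad : ∀ α : K, (p α).1 ∉ Bad := fun α => (p α).2.2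
  refine ⟨fun α => ![a α, b α], ?_, γ, ?_⟩
  · rintro ⟨α, i⟩ ⟨β, j⟩ h
    simp only at h
    fin_cases i <;> fin_cases j <;>
      simp only [Matrix.cons_val_zero, Matrix.cons_val_one, Matrix.head_cons] at h <;>
      simp only [Prod.mk.injEq]
    · -- a α = a β
      have h' : E ((p α).1) = E ((p β).1) := sub_left_inj.mp h
      have hpp : (p α).1 = (p β).1 := hEinj h'
      exact ⟨p.injective (Subtype.ext hpp), trivial⟩
    · -- a α = b β
      exfalso
      refine hpBad α ⟨β, ?_⟩
      have h2 : E ((p α).1) = E t - E ((q β).1) + E t := sub_eq_iff_eq_add.mp h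
      rw [h2]; abel
    · -- b α = a β
      exfalso
      refine hpBad β ⟨α, ?_⟩
      have h2 : E ((p β).1) = E t - E ((q α).1) + E t := sub_eq_iff_eq_add.mp h.symm
      rw [h2]; abel
    · -- b α = b β
      have h' : E ((q α).1) = E ((q β).1) := sub_right_inj.mp h
      have hqq : (q α).1 = (q β).1 := hEinj h'
      exact ⟨q.injective (Subtype.ext hqq), trivial⟩
  · rintro z (hz | hz)
    · rcases hz with hz | hz
      · obtain ⟨α, rfl⟩ := hz
        simpa using hca α
      · obtain ⟨α, rfl⟩ := hz
        simpa using hcb α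
    · obtain ⟨α, β, rfl⟩ := hz
      simpa using hcab α β

/-- cardinality of initial segments in the canonical `(succ κ)`-type. -/
lemma iio_small (κ : Cardinal.{u}) (ι : (Order.succ κ).ord.ToType) :
    #(Iio ι) ≤ κ :=
  Order.lt_succ_iff.mp (Cardinal.mk_Iio_ord_toType ι)

end Stmt2Proof

open Cardinal Set Stmt2Proof in
/-- Let `κ` be infinite and `λ = (2^κ)⁺`. Every abelian group `G` of
cardinality `λ` satisfies `G → (κ×2)^{FS_matrix}_κ`: for every colouring of `G` with at
most `κ` colours, there is a family `(x_{α,i} | α < κ, i < 2)` of pairwise distinct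
elements such that the colouring is constant on
`{x_{α,0} | α < κ} ∪ {x_{α,1} | α < κ} ∪ {x_{α,0} + x_{β,1} | α, β < κ}`. -/
theorem stmt_2 (κ : Cardinal.{u}) (hκ : Cardinal.aleph0 ≤ κ)
    (G : Type u) [AddCommGroup G]
    (hG : Cardinal.mk G = Order.succ ((2 : Cardinal.{u}) ^ κ))
    (C : Type u) (c : G → C) (hC : Cardinal.mk C ≤ κ) :
    ∃ x : κ.ord.ToType → Fin 2 → G,
      Function.Injective (fun p : κ.ord.ToType × Fin 2 => x p.1 p.2) ∧
      ∃ δ : C, ∀ z ∈ (Set.range fun α => x α 0) ∪ (Set.range fun α => x α 1) ∪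
          {z | ∃ α β, z = x α 0 + x β 1}, c z = δ := by
  have hG2 : (2 : Cardinal.{u}) ^ κ < #G := by rw [hG]; exact Order.lt_succ _
  exact main_aux κ hκ c hC hG2 ((Order.succ κ).ord.ToType)
    (by rw [Cardinal.mk_toType, Cardinal.card_ord]) (iio_small κ)
    (κ.ord.ToType) (by rw [Cardinal.mk_toType, Cardinal.card_ord])
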